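/- Let ψ_s be a conjunctive query with exactly one inequality x ≠ x', let ψ'_s be ψ_s with the inequality removed. Then for every finite structure D, the number of homomorphisms from ψ'_s into blowup(D,2) that satisfy x ≠ x' is at least half the total number of homomorphisms from ψ'_s into blowup(D,2). Equivalently, ψ_s(blowup(D,2)) ≥ ψ'_s(blowup(D,2))/2. -/

import Mathlib

/-- A relational signature: a type of relation symbols with arities. -/
structure Sig where
  symb : Type
  ar : symb → ℕ

/-- A finite relational structure over a signature. -/
structure Str (σ : Sig) where
  V : Type
  [fin : Fintype V]
  rel : ∀ s : σ.symb, Set (Fin (σ.ar s) → V)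

attribute [instance] Str.fin

/-- `f` is a homomorphism of relational structures from `A` to `B`. -/
def IsHom {σ : Sig} (A B : Str σ) (f : A.V → B.V) : Prop :=
  ∀ (s : σ.symb) (t : Fin (σ.ar s) → A.V), t ∈ A.rel s → (f ∘ t) ∈ B.rel s

/-- The number of homomorphisms from `A` to `B` (bag semantics: `A(B) = |Hom(A,B)|`). -/
noncomputable def homCount {σ : Sig} (A B : Str σ) : ℕ :=
  Nat.card {f : A.V → B.V // IsHom A B f}


/-- The `k`-fold blow-up of a structure `D`. -/
def blowup {σ : Sig} (D : Str σ) (k : ℕ) : Str σ where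
  V := D.V × Fin k
  rel := fun s => {t | (fun i => (t i).1) ∈ D.rel s}

/-- Let `ψ_s` be a conjunctive query with exactly one inequality `x ≠ x'` and `ψ'_s`
the same query with the inequality removed (canonical structure `ψ'`).  Then for every
finite structure `D`: `ψ_s(blowup(D,2)) ≥ ψ'_s(blowup(D,2)) / 2`, i.e. the number of
homomorphisms of `ψ'` into `blowup(D,2)` mapping `x` and `x'` to distinct vertices is
at least half the total number of homomorphisms of `ψ'` into `blowup(D,2)`. -/
theorem stmt10 {σ : Sig} (ψ' D : Str σ) (x x' : ψ'.V) (hxx : x ≠ x') :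
    Nat.card {h : ψ'.V → (blowup D 2).V // IsHom ψ' (blowup D 2) h} ≤
      2 * Nat.card {h : ψ'.V → (blowup D 2).V //
            IsHom ψ' (blowup D 2) h ∧ h x ≠ h x'} := by
  classical
  set G := {h : ψ'.V → (blowup D 2).V // IsHom ψ' (blowup D 2) h ∧ h x ≠ h x'}
  have flipne : ∀ a : Fin 2, a ≠ a + 1 := by decide
  have flipinj : ∀ a b : Fin 2, a + 1 = b + 1 → a = b := by decide
  have key : ∀ (h g : ψ'.V → (blowup D 2).V), IsHom ψ' (blowup D 2) h →
      (∀ v, (g v).1 = (h v).1) → IsHom ψ' (blowup D 2) g := by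
    intro h g hh hfst s t ht
    have hmem := hh s t ht
    simp only [blowup, Set.mem_setOf_eq] at hmem ⊢
    have e : (fun i => ((g ∘ t) i).1) = fun i => ((h ∘ t) i).1 :=
      funext fun i => hfst (t i)
    show (fun i => ((g ∘ t) i).1) ∈ D.rel s; rw [e]; exact hmem
  set φ : (ψ'.V → (blowup D 2).V) → (ψ'.V → (blowup D 2).V) :=
    fun h v => if v = x' then ((h v).1, (h v).2 + 1) else h v with hφ
  have φx : ∀ h, φ h x = h x := fun h => if_neg hxx
  have φx' : ∀ h, φ h x' = ((h x').1, (h x').2 + 1) := fun h => if_pos rfl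
  have φfst : ∀ h v, ((φ h) v).1 = (h v).1 := by
    intro h v
    by_cases hv : v = x'
    · simp only [hφ]; exact (congrArg Prod.fst (if_pos hv)).trans rfl
    · simp only [hφ]; exact congrArg Prod.fst (if_neg hv)
  have hgood : ∀ h, IsHom ψ' (blowup D 2) h → h x = h x' →
      IsHom ψ' (blowup D 2) (φ h) ∧ φ h x ≠ φ h x' := by
    intro h hh he
    refine ⟨key h (φ h) hh (φfst h), ?_⟩
    rw [φx, φx', he]
    intro hc
    exact flipne (h x').2 (congrArg Prod.snd hc)
  let Φ : {h : ψ'.V → (blowup D 2).V // IsHom ψ' (blowup D 2) h} → G × Fin 2 :=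
    fun p => if hg : p.1 x ≠ p.1 x' then (⟨p.1, p.2, hg⟩, 0)
      else (⟨φ p.1, hgood p.1 p.2 (not_not.1 hg)⟩, 1)
  have hΦinj : Function.Injective Φ := by
    rintro ⟨h, hh⟩ ⟨g, hg⟩ heq
    simp only [Φ] at heq
    by_cases h1 : h x ≠ h x' <;> by_cases h2 : g x ≠ g x'
    · rw [dif_pos h1, dif_pos h2] at heq
      have hval : h = g := congrArg (fun p => (p.1 : G).1) heq
      exact Subtype.ext hval
    · rw [dif_pos h1, dif_neg h2] at heq
      have h01 : (0 : Fin 2) = 1 := congrArg Prod.snd heq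
      exact absurd h01 (by decide)
    · rw [dif_neg h1, dif_pos h2] at heq
      have h01 : (1 : Fin 2) = 0 := congrArg Prod.snd heq
      exact absurd h01 (by decide)
    · rw [dif_neg h1, dif_neg h2] at heq
      have hfg : φ h = φ g := congrArg Subtype.val (congrArg Prod.fst heq)
      refine Subtype.ext (funext fun v => ?_)
      show h v = g v
      have hv' := congrFun hfg v
      by_cases hv : v = x'
      · subst hv
        rw [φx', φx'] at hv'
        injection hv' with e1 e2'
        exact Prod.ext e1 (flipinj _ _ e2')
      · simp only [hφ] at hv'; exact (if_neg hv).symm.trans (hv'.trans (if_neg hv))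
  calc Nat.card {h : ψ'.V → (blowup D 2).V // IsHom ψ' (blowup D 2) h}
      ≤ Nat.card (G × Fin 2) := Nat.card_le_card_of_injective Φ hΦinj
    _ = 2 * Nat.card G := by simp [Nat.card_prod, mul_comm]
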